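/- arXiv:1806.08845 — 4 statements merged into one kernel-verified Lean document; each statement's English description precedes it below -/
import Mathlib

section
/- Let a = (a₁,…,a_N) ∈ ℝ^N with all aₖ ≠ 0 and ∑ₖ aₖ = 1, let v ≥ N − 1, and suppose B ∈ ℝ^{v×N} is such that M = aᵀa + BᵀB is diagonal. Set c = (c₁,…,c_N) with cₖ = aₖ/√(mₖₖ) and m = (√m₁₁,…,√m_NN). If in addition ∑ₖ mₖₖ = 1, then aₖ = mₖₖ for every k; in particular aₖ > 0 for all k. -/
/-- If all `a k ≠ 0`, `∑ a k = 1`, `v ≥ N − 1`, `M = aᵀa + BᵀB` is diagonal and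
`∑ₖ mₖₖ = 1`, then `a k = mₖₖ` for every `k`; in particular `a k > 0`. -/
theorem stmt_4 (N v : ℕ) (hv : N - 1 ≤ v) (a : Fin N → ℝ) (ha : ∀ k, a k ≠ 0)
    (hsum : ∑ k, a k = 1) (B : Matrix (Fin v) (Fin N) ℝ)
    (M : Matrix (Fin N) (Fin N) ℝ)
    (hM : ∀ k t, M k t = a k * a t + ∑ i : Fin v, B i k * B i t)
    (hdiag : ∀ k t, k ≠ t → M k t = 0)
    (htr : ∑ k, M k k = 1) :
    ∀ k, a k = M k k ∧ 0 < a k := by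
  set w : Fin v → ℝ := fun i => ∑ t, B i t with hw
  have key : ∀ k, M k k = ∑ t, M k t := by
    intro k
    rw [Finset.sum_eq_single k]
    · intro t _ ht; exact hdiag k t (Ne.symm ht)
    · simp
  have hrow : ∀ k, ∑ t, M k t = a k + ∑ i, B i k * w i := by
    intro k
    simp only [hM]
    rw [Finset.sum_add_distrib, ← Finset.mul_sum, hsum, mul_one]
    congr 1
    rw [Finset.sum_comm]
    simp [hw, Finset.mul_sum]
  have htot : ∑ k, M k k = 1 + ∑ i, w i ^ 2 := by
    calc ∑ k, M k k = ∑ k, (a k + ∑ i, B i k * w i) := by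
          refine Finset.sum_congr rfl fun k _ => ?_
          rw [key k, hrow k]
      _ = 1 + ∑ i, w i ^ 2 := by
          rw [Finset.sum_add_distrib, hsum]
          congr 1
          rw [Finset.sum_comm]
          refine Finset.sum_congr rfl fun i _ => ?_
          rw [← Finset.sum_mul, pow_two]
  have hw0 : ∀ i, w i = 0 := by
    have hs : ∑ i, w i ^ 2 = 0 := by linarith [htot, htr]
    intro i
    have := (Finset.sum_eq_zero_iff_of_nonneg
      (fun i _ => sq_nonneg (w i))).mp hs i (Finset.mem_univ i)
    exact pow_eq_zero_iff (two_ne_zero) |>.mp this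
  have heq : ∀ k, a k = M k k := by
    intro k
    rw [key k, hrow k]
    simp [hw0]
  intro k
  refine ⟨heq k, ?_⟩
  have h1 : M k k = a k ^ 2 + ∑ i, B i k ^ 2 := by
    rw [hM]; ring_nf
  have h2 : (0:ℝ) ≤ ∑ i, B i k ^ 2 :=
    Finset.sum_nonneg fun i _ => sq_nonneg _
  have h3 : 0 < a k ^ 2 := pow_pos (abs_pos.mpr (ha k)) 2 |>.trans_le (by rw [sq_abs])
  nlinarith [heq k]
end

section
/- Let a = (a₁,…,a_N) be a vector of positive real numbers with ∑ₖ aₖ = 1, and let v ≥ N − 1. Then there exists B ∈ ℝ^{v×N} such that aᵀa + BᵀB = diag(a₁,…,a_N). -/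
/-- Householder-type construction: for a unit vector `c` (with nonnegative last entry)
there is an orthogonal matrix `H` whose last row is `-c`. -/
lemma exists_H (N : ℕ) (hN : 0 < N) (c : Fin N → ℝ) (hc1 : ∑ k, c k ^ 2 = 1)
    (hL : 0 ≤ c ⟨N - 1, by omega⟩) :
    ∃ H : Fin N → Fin N → ℝ,
      (∀ k t, ∑ j, H j k * H j t = if k = t then 1 else 0) ∧
      (∀ k, H ⟨N - 1, by omega⟩ k = - c k) := by
  set L : Fin N := ⟨N - 1, by omega⟩ with hLdef
  set s : ℝ := c L with hsdef
  have hs : 0 < 1 + s := by linarith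
  have hne : (1 + s) ≠ 0 := ne_of_gt hs
  set u : Fin N → ℝ := fun k => c k + (if k = L then 1 else 0) with hu
  have huL : u L = s + 1 := by simp [hu, hsdef]
  have hsum_uu : ∑ j, u j * u j = 2 * (1 + s) := by
    have key : ∀ j, u j * u j = c j ^ 2 + (if j = L then 2 * c j + 1 else 0) := by
      intro j; by_cases h : j = L <;> simp [hu, h] <;> ring
    rw [Finset.sum_congr rfl fun j _ => key j, Finset.sum_add_distrib, hc1,
      Finset.sum_ite_eq' Finset.univ L (fun j => 2 * c j + 1)]
    simp only [Finset.mem_univ, if_true]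
    ring
  refine ⟨fun j k => (if j = k then 1 else 0) - u j * u k / (1 + s), ?_, ?_⟩
  · intro k t
    have expand : ∀ j : Fin N,
        ((if j = k then (1:ℝ) else 0) - u j * u k / (1 + s)) *
        ((if j = t then (1:ℝ) else 0) - u j * u t / (1 + s)) =
        (if j = k then (1:ℝ) else 0) * (if j = t then (1:ℝ) else 0)
          - (if j = k then (1:ℝ) else 0) * (u j * (u t / (1 + s)))
          - (if j = t then (1:ℝ) else 0) * (u j * (u k / (1 + s)))
          + u j * u j * (u k / (1 + s) * (u t / (1 + s))) := by
      intro j; ring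
    rw [Finset.sum_congr rfl fun j _ => expand j]
    rw [Finset.sum_add_distrib, Finset.sum_sub_distrib, Finset.sum_sub_distrib,
      ← Finset.sum_mul, hsum_uu]
    have e1 : (∑ j, (if j = k then (1:ℝ) else 0) * (if j = t then (1:ℝ) else 0))
        = if k = t then 1 else 0 := by
      simp only [ite_mul, one_mul, zero_mul, Finset.sum_ite_eq', Finset.mem_univ, if_true]
    have e2 : (∑ j, (if j = k then (1:ℝ) else 0) * (u j * (u t / (1 + s))))
        = u k * (u t / (1 + s)) := by
      simp only [ite_mul, one_mul, zero_mul, Finset.sum_ite_eq', Finset.mem_univ, if_true]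
    have e3 : (∑ j, (if j = t then (1:ℝ) else 0) * (u j * (u k / (1 + s))))
        = u t * (u k / (1 + s)) := by
      simp only [ite_mul, one_mul, zero_mul, Finset.sum_ite_eq', Finset.mem_univ, if_true]
    rw [e1, e2, e3]
    by_cases h : k = t <;> simp only [h, if_true, if_false] <;> field_simp <;> ring
  · intro k
    show (if L = k then (1:ℝ) else 0) - u L * u k / (1 + s) = - c k
    have hLk : (if L = k then (1:ℝ) else 0) = (if k = L then 1 else 0) := by
      by_cases h : k = L <;> simp [h, eq_comm]
    rw [huL, hLk]
    by_cases h : k = L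
    · subst h
      rw [huL]
      rw [if_pos rfl]
      field_simp
      ring
    · have : u k = c k := by simp [hu, h]
      rw [this, if_neg h]
      field_simp
      ring

/-- For positive `a k` summing to `1` and `v ≥ N − 1`, there exists `B ∈ ℝ^{v×N}` with
`aᵀa + BᵀB = diag(a₁,…,a_N)`. -/
theorem stmt_5 (N v : ℕ) (hv : N - 1 ≤ v) (a : Fin N → ℝ) (hpos : ∀ k, 0 < a k)
    (hsum : ∑ k, a k = 1) :
    ∃ B : Matrix (Fin v) (Fin N) ℝ,
      ∀ k t, a k * a t + (∑ i : Fin v, B i k * B i t) = if k = t then a k else 0 := by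
  have hN : 0 < N := by
    rcases Nat.eq_zero_or_pos N with h | h
    · subst h; simp at hsum
    · exact h
  set c : Fin N → ℝ := fun k => Real.sqrt (a k) with hc
  have hc2 : ∀ k, c k ^ 2 = a k := fun k => Real.sq_sqrt (hpos k).le
  have hc1 : ∑ k, c k ^ 2 = 1 := by
    rw [Finset.sum_congr rfl fun k _ => hc2 k]; exact hsum
  have hcnn : ∀ k, 0 ≤ c k := fun k => Real.sqrt_nonneg _
  obtain ⟨H, hHH, hHL⟩ := exists_H N hN c hc1 (hcnn _)
  set L : Fin N := ⟨N - 1, by omega⟩ with hLdef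
  refine ⟨fun i k => if h : (i : ℕ) < N - 1 then H ⟨(i : ℕ), by omega⟩ k * c k else 0, ?_⟩
  intro k t
  set f : Fin N → ℝ := fun j => H j k * c k * (H j t * c t) with hf
  set F : ℕ → ℝ := fun m => if h : m < N then f ⟨m, h⟩ else 0 with hF
  have step2 : (∑ i : Fin v,
      (if h : (i : ℕ) < N - 1 then H ⟨(i : ℕ), by omega⟩ k * c k else 0) *
      (if h : (i : ℕ) < N - 1 then H ⟨(i : ℕ), by omega⟩ t * c t else 0))
      = ∑ m ∈ Finset.range v, (if m < N - 1 then F m else 0) := by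
    rw [← Fin.sum_univ_eq_sum_range (fun m => if m < N - 1 then F m else 0) v]
    refine Finset.sum_congr rfl fun i _ => ?_
    by_cases h : (i : ℕ) < N - 1
    · have h' : (i : ℕ) < N := by omega
      simp only [h, dif_pos, if_pos, hF, h', f]
      try ring
    · simp [h]
  have step3 : ∑ m ∈ Finset.range v, (if m < N - 1 then F m else 0)
      = ∑ m ∈ Finset.range (N - 1), F m := by
    rw [← Finset.sum_subset (Finset.range_subset_range.2 hv)
        (fun x _ hx => by simp [Finset.mem_range] at hx; simp [hx])]
    exact Finset.sum_congr rfl fun m hm => by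
      simp [Finset.mem_range.1 hm]
  have step4 : ∑ m ∈ Finset.range N, F m
      = ∑ m ∈ Finset.range (N - 1), F m + F (N - 1) := by
    conv_lhs => rw [show N = (N - 1) + 1 by omega]
    rw [Finset.sum_range_succ]
  have step5 : ∑ m ∈ Finset.range N, F m = ∑ j : Fin N, f j := by
    rw [← Fin.sum_univ_eq_sum_range F N]
    exact Finset.sum_congr rfl fun j _ => by simp [hF, j.2]
  have hFN : F (N - 1) = a k * a t := by
    have : F (N - 1) = f L := by simp [hF, hLdef, Nat.sub_lt hN one_pos]
    rw [this, hf]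
    simp only [hHL]
    linear_combination (c t ^ 2) * hc2 k + a k * hc2 t
  have step6 : ∑ j : Fin N, f j = (if k = t then 1 else 0) * (c k * c t) := by
    have : ∀ j, f j = H j k * H j t * (c k * c t) := fun j => by rw [hf]; ring
    rw [Finset.sum_congr rfl fun j _ => this j, ← Finset.sum_mul, hHH]
  rw [step2, step3]
  have : ∑ m ∈ Finset.range (N - 1), F m
      = (if k = t then 1 else 0) * (c k * c t) - a k * a t := by
    have := step4
    rw [step5, step6, hFN] at this
    linarith
  rw [this]
  split_ifs with h
  · subst h
    linear_combination hc2 k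
  · ring
end

section
/- Let a = (a₁,…,a_N) be positive reals with ∑ₖ aₖ = 1, let nₖ ∈ ℤ^s be distinct exponents, and suppose the trigonometric polynomial H₀(γ) = ∑ₖ aₖ e^{2πi nₖ·γ} satisfies H₀(q) = δ_{0,q} for all q ∈ {0, 1/2}^s. If B ∈ ℝ^{v×N} satisfies aᵀa + BᵀB = diag(a₁,…,a_N), then the vector trigonometric polynomial H₁(γ) = B·(e^{2πi nₖ·γ})ₖ satisfies the UEP equations: conj(H₀(γ+q))·H₀(γ) + H₁*(γ+q)·H₁(γ) = δ_{0,q} for all q ∈ {0,1/2}^s and all γ ∈ ℝ^s. -/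
set_option maxHeartbeats 1000000 in
/-- If `H₀(γ) = ∑ₖ aₖ e^{2πi nₖ·γ}` has positive coefficients summing to 1 and satisfies
`H₀(q) = δ₀,q` for `q ∈ {0,1/2}^s`, and `B` satisfies `aᵀa + BᵀB = diag(a)`, then
`H₁ = B·w` satisfies the UEP equations. -/
theorem stmt_7 (s N v : ℕ) (a : Fin N → ℝ) (hpos : ∀ k, 0 < a k) (hsum : ∑ k, a k = 1)
    (n : Fin N → Fin s → ℤ) (hn : Function.Injective n)
    (H0 : (Fin s → ℝ) → ℂ)
    (hH0 : ∀ γ, H0 γ = ∑ k, (a k : ℂ) *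
      Complex.exp (2 * Real.pi * Complex.I * ∑ i, (n k i : ℂ) * (γ i : ℂ)))
    (hUEP0 : ∀ q : Fin s → ℝ, (∀ i, q i = 0 ∨ q i = 1 / 2) →
      H0 q = if q = 0 then 1 else 0)
    (B : Matrix (Fin v) (Fin N) ℝ)
    (hB : ∀ k t, a k * a t + (∑ i : Fin v, B i k * B i t) = if k = t then a k else 0)
    (H1 : Fin v → (Fin s → ℝ) → ℂ)
    (hH1 : ∀ i γ, H1 i γ = ∑ k, (B i k : ℂ) *
      Complex.exp (2 * Real.pi * Complex.I * ∑ j, (n k j : ℂ) * (γ j : ℂ))) :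
    ∀ γ q : Fin s → ℝ, (∀ i, q i = 0 ∨ q i = 1 / 2) →
      (starRingEnd ℂ) (H0 (γ + q)) * H0 γ +
        (∑ i : Fin v, (starRingEnd ℂ) (H1 i (γ + q)) * H1 i γ) =
      if q = 0 then 1 else 0 := by
  intro γ q hq
  set E : Fin N → (Fin s → ℝ) → ℂ := fun k x =>
    Complex.exp (2 * Real.pi * Complex.I * ∑ j, (n k j : ℂ) * (x j : ℂ)) with hE
  have hconjE : ∀ k (x : Fin s → ℝ), (starRingEnd ℂ) (E k x) =
      Complex.exp (-(2 * Real.pi * Complex.I * ∑ j, (n k j : ℂ) * (x j : ℂ))) := by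
    intro k x
    have hS : (starRingEnd ℂ) (∑ j, (n k j : ℂ) * (x j : ℂ)) =
        ∑ j, (n k j : ℂ) * (x j : ℂ) := by
      rw [map_sum]
      apply Finset.sum_congr rfl; intro j _
      rw [map_mul, map_intCast, Complex.conj_ofReal]
    simp only [hE]
    rw [← Complex.exp_conj, map_mul, map_mul, map_mul, hS, Complex.conj_I, Complex.conj_ofReal,
      map_ofNat]
    ring_nf
  have hcc : ∀ k (x : Fin s → ℝ), (starRingEnd ℂ) (E k x) * E k x = 1 := by
    intro k x
    rw [hconjE, hE, ← Complex.exp_add, neg_add_cancel, Complex.exp_zero]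
  have hadd : ∀ k, E k (γ + q) = E k γ * E k q := by
    intro k
    simp only [hE]
    rw [← Complex.exp_add]
    congr 1
    rw [← mul_add, ← Finset.sum_add_distrib]
    congr 1
    refine Finset.sum_congr rfl fun j _ => ?_
    push_cast [Pi.add_apply]
    ring
  have hkey : ∀ k, (starRingEnd ℂ) (E k (γ + q)) * E k γ = (starRingEnd ℂ) (E k q) := by
    intro k
    rw [hadd k, map_mul, mul_right_comm, hcc, one_mul]
  have hH0' : ∀ x, H0 x = ∑ k, (a k : ℂ) * E k x := fun x => hH0 x
  have hH1' : ∀ i x, H1 i x = ∑ k, (B i k : ℂ) * E k x := fun i x => hH1 i x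
  have t1 : (starRingEnd ℂ) (H0 (γ + q)) * H0 γ =
      ∑ k, ∑ t, ((a k : ℂ) * (a t : ℂ)) * ((starRingEnd ℂ) (E k (γ + q)) * E t γ) := by
    rw [hH0' (γ + q), hH0' γ, map_sum, Finset.sum_mul_sum]
    refine Finset.sum_congr rfl fun k _ => Finset.sum_congr rfl fun t _ => ?_
    rw [map_mul, Complex.conj_ofReal]; ring
  have t2 : (∑ i : Fin v, (starRingEnd ℂ) (H1 i (γ + q)) * H1 i γ) =
      ∑ k, ∑ t, ((∑ i : Fin v, (B i k : ℂ) * (B i t : ℂ))) *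
        ((starRingEnd ℂ) (E k (γ + q)) * E t γ) := by
    have h2 : ∀ i, (starRingEnd ℂ) (H1 i (γ + q)) * H1 i γ =
        ∑ k, ∑ t, ((B i k : ℂ) * (B i t : ℂ)) * ((starRingEnd ℂ) (E k (γ + q)) * E t γ) := by
      intro i
      rw [hH1' i (γ + q), hH1' i γ, map_sum, Finset.sum_mul_sum]
      refine Finset.sum_congr rfl fun k _ => Finset.sum_congr rfl fun t _ => ?_
      rw [map_mul, Complex.conj_ofReal]; ring
    simp only [h2]
    rw [Finset.sum_comm]
    refine Finset.sum_congr rfl fun k _ => ?_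
    rw [Finset.sum_comm]
    refine Finset.sum_congr rfl fun t _ => ?_
    rw [← Finset.sum_mul]
  have main : (starRingEnd ℂ) (H0 (γ + q)) * H0 γ +
      (∑ i : Fin v, (starRingEnd ℂ) (H1 i (γ + q)) * H1 i γ) =
      ∑ k, ∑ t, ((a k * a t + ∑ i : Fin v, B i k * B i t : ℝ) : ℂ) *
        ((starRingEnd ℂ) (E k (γ + q)) * E t γ) := by
    rw [t1, t2, ← Finset.sum_add_distrib]
    refine Finset.sum_congr rfl fun k _ => ?_
    rw [← Finset.sum_add_distrib]
    refine Finset.sum_congr rfl fun t _ => ?_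
    push_cast
    ring
  rw [main]
  have step : ∀ k, ∑ t, ((a k * a t + ∑ i : Fin v, B i k * B i t : ℝ) : ℂ) *
      ((starRingEnd ℂ) (E k (γ + q)) * E t γ) = (a k : ℂ) * (starRingEnd ℂ) (E k q) := by
    intro k
    have : ∀ t, ((a k * a t + ∑ i : Fin v, B i k * B i t : ℝ) : ℂ) *
        ((starRingEnd ℂ) (E k (γ + q)) * E t γ) =
        if k = t then (a k : ℂ) * ((starRingEnd ℂ) (E k (γ + q)) * E t γ) else 0 := by
      intro t
      rw [hB k t]
      split <;> simp
    simp only [this]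
    rw [Finset.sum_ite_eq]
    simp [hkey k]
  simp only [step]
  have : ∑ k, (a k : ℂ) * (starRingEnd ℂ) (E k q) = (starRingEnd ℂ) (H0 q) := by
    rw [hH0, map_sum]
    apply Finset.sum_congr rfl; intro k _
    rw [map_mul, Complex.conj_ofReal, hE]
  rw [this, hUEP0 q hq]
  split <;> simp
end

section
/- Let a = (a₁, a₂, a₃, a₄) be a real vector with all entries strictly positive, and B = (b₁, b₂, b₃, b₄) a real vector such that the vectors vₖ = (aₖ, bₖ) ∈ ℝ² satisfy v₁ ⊥ v₃ and v₁ ⊥ v₄ and v₂ ⊥ v₃ with ⟨v₁, v₂⟩ = −⟨v₃, v₄⟩ ≠ 0. Then a contradiction follows, i.e., no such B exists. (Equivalently: a 4-tap orthonormal low-pass filter satisfying these UEP constraints cannot have all coefficients positive.) -/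
/-- A 4-tap orthonormal low-pass filter satisfying the UEP constraints cannot have all
coefficients positive: with `vₖ = (aₖ, bₖ)`, the relations `v₁ ⊥ v₃`, `v₁ ⊥ v₄`,
`v₂ ⊥ v₃`, `⟨v₁, v₂⟩ = −⟨v₃, v₄⟩ ≠ 0` and `aₖ > 0` for all `k` are contradictory. -/
theorem stmt_18 (a b : Fin 4 → ℝ) (hpos : ∀ k, 0 < a k)
    (h13 : a 0 * a 2 + b 0 * b 2 = 0)
    (h14 : a 0 * a 3 + b 0 * b 3 = 0)
    (h23 : a 1 * a 2 + b 1 * b 2 = 0)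
    (h12 : a 0 * a 1 + b 0 * b 1 = -(a 2 * a 3 + b 2 * b 3))
    (hne : a 0 * a 1 + b 0 * b 1 ≠ 0) :
    False := by
  have h0 := hpos 0; have h1 := hpos 1; have h2 := hpos 2; have h3 := hpos 3
  have k02 : b 0 * b 2 < 0 := by nlinarith
  have k03 : b 0 * b 3 < 0 := by nlinarith
  have k12 : b 1 * b 2 < 0 := by nlinarith
  have hb0 : b 0 ≠ 0 := fun h => by rw [h] at k02; simp at k02
  have hb2 : b 2 ≠ 0 := fun h => by rw [h] at k02; simp at k02
  have p1 : 0 < b 0 * b 1 * (b 2 * b 2) := by nlinarith [mul_pos_of_neg_of_neg k02 k12]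
  have p2 : 0 < b 2 * b 3 * (b 0 * b 0) := by nlinarith [mul_pos_of_neg_of_neg k02 k03]
  have q1 : 0 < b 0 * b 1 := (mul_pos_iff.mp p1) |>.elim (fun h => h.1)
    (fun h => absurd h.2 (not_lt.mpr (mul_self_nonneg _)))
  have q2 : 0 < b 2 * b 3 := (mul_pos_iff.mp p2) |>.elim (fun h => h.1)
    (fun h => absurd h.2 (not_lt.mpr (mul_self_nonneg _)))
  nlinarith
end
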